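/- Suppose y ∈ H and L > 0 satisfy F(p_L(y)) ≤ Q_L(p_L(y), y). Then for every x ∈ H, F(x) − F(p_L(y)) ≥ (L/2)‖p_L(y) − y‖² + L⟨p_L(y) − y, y − x⟩ (an inequality in the extended reals; here F(p_L(y)) is finite). -/

import Mathlib

open scoped RealInnerProductSpace

lemma grad_ineq_aux
    {H : Type*} [NormedAddCommGroup H] [InnerProductSpace ℝ H] [CompleteSpace H]
    {f : H → ℝ} {v y : H} (hconv : ConvexOn ℝ Set.univ f)
    (hd : HasGradientAt f v y) (x : H) :
    f y + ⟪v, x - y⟫ ≤ f x := by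
  set φ : ℝ → ℝ := fun t => f (y + t • (x - y)) with hφdef
  have hline : HasDerivAt (fun s : ℝ => y + s • (x - y)) (x - y) 0 := by
    simpa using ((hasDerivAt_id (0:ℝ)).smul_const (x - y)).const_add y
  have hfd : HasFDerivAt f (InnerProductSpace.toDual ℝ H v) (y + (0:ℝ) • (x - y)) := by
    simpa using (hasGradientAt_iff_hasFDerivAt.mp hd)
  have hφ : HasDerivAt φ ⟪v, x - y⟫ 0 := by
    exact (by simpa [InnerProductSpace.toDual_apply_apply] using hfd.comp_hasDerivAt 0 hline :
      HasDerivAt (f ∘ fun s : ℝ => y + s • (x - y)) ⟪v, x - y⟫ 0)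
  have hslope : ∀ t : ℝ, t ∈ Set.Ioc (0:ℝ) 1 → slope φ 0 t ≤ f x - f y := by
    intro t ht
    have hcomb := hconv.2 (Set.mem_univ y) (Set.mem_univ x)
      (by linarith [ht.1, ht.2] : (0:ℝ) ≤ 1 - t) (le_of_lt ht.1) (by ring)
    have harg : (1 - t) • y + t • x = y + t • (x - y) := by module
    rw [harg] at hcomb
    have h0 : φ 0 = f y := by simp [hφdef]
    rw [slope_def_field, h0, sub_zero, div_le_iff₀ ht.1]
    have : φ t ≤ (1 - t) * f y + t * f x := hcomb
    nlinarith
  have htend : Filter.Tendsto (slope φ 0) (nhdsWithin 0 (Set.Ioi 0)) (nhds ⟪v, x - y⟫) :=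
    (hasDerivAt_iff_tendsto_slope.mp hφ).mono_left
      (nhdsWithin_mono _ (by intro z hz; exact ne_of_gt hz))
  have : ⟪v, x - y⟫ ≤ f x - f y := by
    refine le_of_tendsto htend ?_
    filter_upwards [Ioc_mem_nhdsGT_of_mem (by norm_num : (0:ℝ) ∈ Set.Ico (0:ℝ) 1)] with t ht
    exact hslope t ht
  linarith

theorem key_inequality
    {H : Type*} [NormedAddCommGroup H] [InnerProductSpace ℝ H] [CompleteSpace H]
    (f : H → ℝ) (f' : H → H) (g : H → EReal) (Lf : ℝ) (hLf : 0 ≤ Lf)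
    (hfconv : ConvexOn ℝ Set.univ f)
    (hdiff : ∀ x : H, HasGradientAt f (f' x) x)
    (hlip : ∀ x y : H, ‖f' x - f' y‖ ≤ Lf * ‖x - y‖)
    (hgbot : ∀ x : H, g x ≠ ⊥) (hgproper : ∃ x : H, g x ≠ ⊤)
    (hgconv : ∀ x y : H, ∀ a b : ℝ, 0 ≤ a → 0 ≤ b → a + b = 1 →
      g (a • x + b • y) ≤ (a : EReal) * g x + (b : EReal) * g y)
    (hglsc : LowerSemicontinuous g)
    (y : H) (L : ℝ) (hL : 0 < L) (p : H)
    (hpmin : ∀ x : H,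
      ((f y + ⟪f' y, p - y⟫ + (L / 2) * ‖p - y‖ ^ 2 : ℝ) : EReal) + g p ≤
        ((f y + ⟪f' y, x - y⟫ + (L / 2) * ‖x - y‖ ^ 2 : ℝ) : EReal) + g x)
    (hFQ : (f p : EReal) + g p ≤
      ((f y + ⟪f' y, p - y⟫ + (L / 2) * ‖p - y‖ ^ 2 : ℝ) : EReal) + g p) :
    (∃ c : ℝ, (f p : EReal) + g p = (c : EReal)) ∧
      ∀ x : H, (f p : EReal) + g p +
          (((L / 2) * ‖p - y‖ ^ 2 + L * ⟪p - y, y - x⟫ : ℝ) : EReal) ≤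
        (f x : EReal) + g x := by
  obtain ⟨x₀, hx₀⟩ := hgproper
  -- g p is finite
  have hpt : g p ≠ ⊤ := by
    intro htop
    have h := hpmin x₀
    rw [htop] at h
    rw [EReal.add_top_of_ne_bot (EReal.coe_ne_bot _)] at h
    exact absurd (top_le_iff.mp h) (EReal.add_lt_top (EReal.coe_ne_top _) hx₀).ne
  set gp : ℝ := (g p).toReal with hgpdef
  have hgp : g p = (gp : EReal) := (EReal.coe_toReal hpt (hgbot p)).symm
  -- hFQ as a real inequality
  have hFQr : f p ≤ f y + ⟪f' y, p - y⟫ + (L / 2) * ‖p - y‖ ^ 2 := by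
    rw [hgp] at hFQ
    norm_cast at hFQ
    linarith
  refine ⟨⟨f p + gp, by rw [hgp]; norm_cast⟩, ?_⟩
  intro x
  by_cases hxt : g x = ⊤
  · rw [hxt, EReal.add_top_of_ne_bot (EReal.coe_ne_bot _)]
    exact le_top
  set gx : ℝ := (g x).toReal with hgxdef
  have hgx : g x = (gx : EReal) := (EReal.coe_toReal hxt (hgbot x)).symm
  -- the key real inequality A ≥ 0
  set B : ℝ := (L / 2) * ‖x - p‖ ^ 2 with hBdef
  have hB : 0 ≤ B := by positivity
  have hkey : ∀ t : ℝ, 0 < t → t ≤ 1 →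
      0 ≤ ⟪f' y, x - p⟫ + L * ⟪p - y, x - p⟫ + gx - gp + t * B := by
    intro t ht0 ht1
    set z : H := (1 - t) • p + t • x with hzdef
    have hchain := (hpmin z).trans (add_le_add (le_refl _)
      (hgconv p x (1 - t) t (by linarith) ht0.le (by ring)))
    rw [hgp, hgx] at hchain
    norm_cast at hchain
    have hz : z - y = (p - y) + t • (x - p) := by rw [hzdef]; module
    have hinner : ⟪f' y, z - y⟫ = ⟪f' y, p - y⟫ + t * ⟪f' y, x - p⟫ := by
      rw [hz, inner_add_right, real_inner_smul_right]
    have hnsq : ‖t • (x - p)‖ ^ 2 = t ^ 2 * ‖x - p‖ ^ 2 := by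
      rw [norm_smul, mul_pow, Real.norm_eq_abs, sq_abs]
    have hnorm : ‖z - y‖ ^ 2 = ‖p - y‖ ^ 2 + 2 * (t * ⟪p - y, x - p⟫) + t ^ 2 * ‖x - p‖ ^ 2 := by
      rw [hz, norm_add_sq_real, real_inner_smul_right, hnsq]
    rw [hinner, hnorm] at hchain
    have h2 : 0 ≤ t * (⟪f' y, x - p⟫ + L * ⟪p - y, x - p⟫ + gx - gp + t * B) := by
      rw [hBdef]; nlinarith [hchain]
    by_contra hneg
    push_neg at hneg
    nlinarith [h2, ht0, hneg]
  have hA : 0 ≤ ⟪f' y, x - p⟫ + L * ⟪p - y, x - p⟫ + gx - gp := by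
    have := le_of_forall_pos_le_add (a := 0)
      (b := ⟪f' y, x - p⟫ + L * ⟪p - y, x - p⟫ + gx - gp) ?_
    · exact this
    intro ε hε
    have ht0 : 0 < min 1 (ε / (B + 1)) := lt_min one_pos (by positivity)
    have ht1 : min 1 (ε / (B + 1)) ≤ 1 := min_le_left _ _
    have h := hkey _ ht0 ht1
    have htB : min 1 (ε / (B + 1)) * B ≤ ε := by
      calc min 1 (ε / (B + 1)) * B ≤ (ε / (B + 1)) * B := by
            apply mul_le_mul_of_nonneg_right (min_le_right _ _) hB
        _ ≤ ε := by
            rw [div_mul_eq_mul_div, div_le_iff₀ (by linarith : (0:ℝ) < B + 1)]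
            nlinarith [hε]
    linarith
  -- gradient inequality
  have hgrad := grad_ineq_aux hfconv (hdiff y) x
  -- inner product identities
  have hi1 : ⟪f' y, x - y⟫ = ⟪f' y, x - p⟫ + ⟪f' y, p - y⟫ := by
    rw [show x - y = (x - p) + (p - y) by module, inner_add_right]
  have hi2 : ⟪p - y, y - x⟫ = -‖p - y‖ ^ 2 - ⟪p - y, x - p⟫ := by
    rw [show y - x = -(p - y) - (x - p) by module, inner_sub_right, inner_neg_right,
      real_inner_self_eq_norm_sq]
  have hi2' : L * ⟪p - y, y - x⟫ = -(L * ‖p - y‖ ^ 2) - L * ⟪p - y, x - p⟫ := by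
    rw [hi2]; ring
  rw [hgp, hgx]
  norm_cast
  linarith [hFQr, hgrad, hA, hi1, hi2']
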